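/- For all n ≥ 1 and all f₁, …, fₙ ∈ A₀, the c-free Kailath–Segall element admits the closed formula: W(f₁, …, fₙ) = Σ over all compositions (c₁, …, c_k) of n, with blocks B₁, …, B_k, and over all subsets S of the set of singleton blocks, of the term (−1)^{n−k+|S|} · (∏_{B ∈ S, B ≠ {n}} ν(f_B)) · (μ(fₙ) if {n} ∈ S, else 1) · ∏_{B ∉ S, blocks taken in increasing order} X(f_B), where a product over an empty index set equals 1. -/

import Mathlib

variable {A₀ : Type*} [NonUnitalRing A₀] [Module ℂ A₀]
  [SMulCommClass ℂ A₀ A₀] [IsScalarTower ℂ A₀ A₀]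
variable {B : Type*} [Ring B] [Algebra ℂ B]

/-- The c-free Kailath–Segall elements `W(f₁, …, fₙ)`, defined by the inductive
recursions `W() = 1`, `W(f) = X(f) − μ(f)·1`,
`W(f, f₁) = X(f)·W(f₁) − W(f·f₁) − μ(f·f₁)·1 − ν(f)·W(f₁)`, and for `n ≥ 2`
`W(f, f₁, …, fₙ) = X(f)·W(f₁, …, fₙ) − W(f·f₁, f₂, …, fₙ) − ν(f·f₁)·W(f₂, …, fₙ)
− ν(f)·W(f₁, …, fₙ)`. -/
noncomputable def KS (X : A₀ →ₗ[ℂ] B) (μ ν : A₀ →ₗ[ℂ] ℂ) : List A₀ → B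
  | [] => 1
  | [f] => X f - μ f • (1 : B)
  | [f, f₁] =>
      X f * KS X μ ν [f₁] - KS X μ ν [f * f₁] - μ (f * f₁) • (1 : B)
        - ν f • KS X μ ν [f₁]
  | f :: f₁ :: f₂ :: r =>
      X f * KS X μ ν (f₁ :: f₂ :: r) - KS X μ ν ((f * f₁) :: f₂ :: r)
        - ν (f * f₁) • KS X μ ν (f₂ :: r) - ν f • KS X μ ν (f₁ :: f₂ :: r)
  termination_by l => l.length
  decreasing_by all_goals simp

/-- For a composition `c` of `n` and `j < c.length`, the product `f_B` of the (1-indexed)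
`f`'s over the `j`-th block `B = {c.sizeUpTo j + 1, …, c.sizeUpTo (j+1)}` of `c`. -/
noncomputable def blockProd (f : ℕ → A₀) {n : ℕ} (c : Composition n)
    (j : Fin c.length) : A₀ :=
  match (List.range (c.blocksFun j)).map (fun t => f (c.sizeUpTo j + 1 + t)) with
  | [] => 0
  | a :: t => t.foldl (· * ·) a

section Aux

set_option linter.unusedVariables false

/-- product f(s+1) * f(s+2) * ... * f(s+k)  (for k ≥ 1; junk for k = 0) -/
noncomputable def pprod (f : ℕ → A₀) (s k : ℕ) : A₀ :=
  ((List.range (k-1)).map fun t => f (s + 2 + t)).foldl (· * ·) (f (s + 1))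

noncomputable def Vlist (X : A₀ →ₗ[ℂ] B) (μ ν : A₀ →ₗ[ℂ] ℂ) (f : ℕ → A₀) :
    List ℕ → ℕ → B
  | [], _ => 1
  | k :: bs, s =>
      ((-1 : ℂ) ^ (k - 1) • X (pprod f s k) +
        (if k = 1 then (-(if bs = [] then μ (f (s+1)) else ν (f (s+1)))) • (1 : B) else 0))
        * Vlist X μ ν f bs (s + k)

noncomputable def T (X : A₀ →ₗ[ℂ] B) (μ ν : A₀ →ₗ[ℂ] ℂ) : List A₀ → B
  | [] => 1
  | a :: l => ∑ k ∈ Finset.range (l.length + 1),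
      ((-1 : ℂ) ^ k • X ((l.take k).foldl (· * ·) a) +
        (if k = 0 then (-(if l.isEmpty then μ a else ν a)) • (1 : B) else 0))
        * T X μ ν (l.drop k)
  termination_by l => l.length
  decreasing_by simp [List.length_drop]

def comps : ℕ → Finset (List ℕ)
  | 0 => {[]}
  | (n+1) => (Finset.range (n+1)).biUnion fun k => (comps (n - k)).image (List.cons (k+1))
  decreasing_by omega

theorem mem_comps : ∀ (n : ℕ) (bs : List ℕ),
    bs ∈ comps n ↔ bs.sum = n ∧ ∀ b ∈ bs, 0 < b
  | 0, bs => by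
    constructor
    · rintro h
      simp [comps] at h
      subst h; simp
    · rintro ⟨h1, h2⟩
      match bs with
      | [] => simp [comps]
      | b :: t =>
        exfalso
        have := h2 b (by simp)
        simp [List.sum_cons] at h1
        omega
  | (n+1), bs => by
    rw [comps]
    simp only [Finset.mem_biUnion, Finset.mem_image, Finset.mem_range]
    constructor
    · rintro ⟨k, hk, bs', hbs', rfl⟩
      rw [mem_comps] at hbs'
      refine ⟨?_, ?_⟩
      · simp [List.sum_cons, hbs'.1]; omega
      · rintro b hb
        rcases List.mem_cons.1 hb with rfl | hb
        · omega
        · exact hbs'.2 b hb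
    · rintro ⟨h1, h2⟩
      match bs with
      | [] => simp at h1
      | b :: t =>
        have hb : 0 < b := h2 b (by simp)
        simp only [List.sum_cons] at h1
        refine ⟨b - 1, by omega, t, ?_, by congr 1; omega⟩
        rw [mem_comps]
        exact ⟨by omega, fun x hx => h2 x (by simp [hx])⟩

variable (X : A₀ →ₗ[ℂ] B) (μ ν : A₀ →ₗ[ℂ] ℂ) (f : ℕ → A₀)

lemma T_nil : T X μ ν [] = 1 := by rw [T]

lemma T_single (a : A₀) : T X μ ν [a] = X a - μ a • (1 : B) := by
  rw [T]
  simp [T_nil, sub_eq_add_neg, neg_smul]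

set_option linter.unusedSectionVars false

lemma T_split (b : A₀) (l₂ : List A₀) :
    T X μ ν (b :: l₂) =
      (∑ i ∈ Finset.range (l₂.length + 1),
        ((-1 : ℂ) ^ i • X ((l₂.take i).foldl (· * ·) b)) * T X μ ν (l₂.drop i))
      - (if l₂.isEmpty then μ b else ν b) • T X μ ν l₂ := by
  rw [T]
  simp only [add_mul, ite_mul, zero_mul]
  rw [Finset.sum_add_distrib, Finset.sum_ite_eq' (Finset.range (l₂.length + 1)) 0
    (fun i => (-(if l₂.isEmpty then μ b else ν b)) • (1:B) * T X μ ν (l₂.drop i))]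
  simp [smul_mul_assoc, neg_smul, sub_eq_add_neg]

lemma T_rec (a g : A₀) (l₂ : List A₀) :
    T X μ ν (a :: g :: l₂) = X a * T X μ ν (g :: l₂) - T X μ ν ((a*g) :: l₂)
      - (if l₂.isEmpty then μ (a*g) else ν (a*g)) • T X μ ν l₂
      - ν a • T X μ ν (g :: l₂) := by
  have h1 := T_split X μ ν (a*g) l₂
  have h2 := T_split X μ ν a (g :: l₂)
  have h3 : ∑ i ∈ Finset.range ((g :: l₂).length + 1),
        ((-1 : ℂ) ^ i • X (((g :: l₂).take i).foldl (· * ·) a)) * T X μ ν ((g :: l₂).drop i)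
      = X a * T X μ ν (g :: l₂)
        - ∑ i ∈ Finset.range (l₂.length + 1),
            ((-1 : ℂ) ^ i • X ((l₂.take i).foldl (· * ·) (a*g))) * T X μ ν (l₂.drop i) := by
    rw [Finset.sum_range_succ']
    simp only [List.take_succ_cons, List.drop_succ_cons, List.foldl_cons, List.take_zero,
      List.foldl_nil, List.drop_zero, pow_succ, pow_zero, one_smul]
    rw [List.length_cons, sub_eq_add_neg, add_comm]
    congr 1
    rw [← Finset.sum_neg_distrib]
    refine Finset.sum_congr rfl fun i _ => ?_
    rw [mul_comm ((-1:ℂ)^i) (-1), neg_one_mul, neg_smul, neg_mul]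
  rw [h2, h3, h1] at *
  simp only [List.isEmpty_cons, if_neg Bool.false_ne_true]
  ring_nf
  abel

theorem KS_eq_T : ∀ (l : List A₀), KS X μ ν l = T X μ ν l
  | [] => by rw [T_nil]; rw [KS]
  | [a] => by rw [T_single]; rw [KS]
  | [a, g] => by
      rw [KS, T_rec, KS_eq_T [g], KS_eq_T [a*g], T_nil]
      simp [sub_eq_add_neg]
  | a :: g :: c :: r => by
      rw [KS, T_rec, KS_eq_T (g::c::r), KS_eq_T ((a*g)::c::r), KS_eq_T (c::r)]
      simp
  termination_by l => l.length
  decreasing_by all_goals simp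

lemma range_drop (n k : ℕ) : (List.range n).drop k = (List.range (n - k)).map (k + ·) := by
  apply List.ext_getElem
  · simp
  · intro i h1 h2
    simp [List.getElem_drop]

lemma eq_nil_of_mem_comps {m : ℕ} {bs : List ℕ} (h : bs ∈ comps m) : bs = [] ↔ m = 0 := by
  rw [mem_comps] at h
  constructor
  · rintro rfl; simpa using h.1.symm
  · rintro rfl
    match bs, h with
    | [], _ => rfl
    | b :: t, ⟨h1, h2⟩ => exfalso; have := h2 b (by simp); simp [List.sum_cons] at h1; omega

lemma sum_comps_succ (g : List ℕ → B) (n : ℕ) :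
    ∑ bs ∈ comps (n+1), g bs
      = ∑ k ∈ Finset.range (n+1), ∑ bs ∈ comps (n - k), g ((k+1) :: bs) := by
  rw [comps]
  rw [Finset.sum_biUnion]
  · exact Finset.sum_congr rfl fun k _ =>
      Finset.sum_image fun x _ y _ h => by injection h
  · intro k _ k' _ hkk'
    refine Finset.disjoint_left.2 fun bs h1 h2 => hkk' ?_
    simp only [Finset.mem_image] at h1 h2
    obtain ⟨x, _, rfl⟩ := h1
    obtain ⟨y, _, hy⟩ := h2
    injection hy with h _
    omega

theorem T_eq_sum : ∀ (n s : ℕ),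
    T X μ ν ((List.range n).map fun t => f (s + t + 1)) = ∑ bs ∈ comps n, Vlist X μ ν f bs s
  | 0, s => by simp [comps, T_nil, Vlist]
  | (n+1), s => by
    rw [sum_comps_succ]
    have hl : (List.range (n+1)).map (fun t => f (s + t + 1))
        = f (s+1) :: ((List.range n).map fun t => f (s + (t+1) + 1)) := by
      rw [List.range_succ_eq_map, List.map_cons, List.map_map]
      simp [Function.comp]
    rw [hl, T]
    rw [List.length_map, List.length_range]
    refine Finset.sum_congr rfl fun k hk => ?_
    have hk' : k ≤ n := by simp at hk; omega
    have hrhs : ∑ bs ∈ comps (n - k), Vlist X μ ν f ((k+1) :: bs) s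
        = ((-1 : ℂ) ^ k • X (pprod f s (k+1)) +
            (if k = 0 then (-(if n = 0 then μ (f (s+1)) else ν (f (s+1)))) • (1 : B) else 0))
          * ∑ bs ∈ comps (n - k), Vlist X μ ν f bs (s + (k+1)) := by
      rw [Finset.mul_sum]
      refine Finset.sum_congr rfl fun bs hbs => ?_
      rw [Vlist]
      have hfac : ((-1 : ℂ)) ^ (k+1-1) • X (pprod f s (k+1)) +
            (if k+1 = 1 then (-(if bs = [] then μ (f (s+1)) else ν (f (s+1)))) • (1:B) else 0)
          = ((-1 : ℂ))^k • X (pprod f s (k+1)) +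
            (if k = 0 then (-(if n = 0 then μ (f (s+1)) else ν (f (s+1)))) • (1:B) else 0) := by
        have hkk : k + 1 - 1 = k := rfl
        rw [hkk]
        congr 1
        by_cases h0 : k = 0
        · subst h0
          have hbn : (bs = []) ↔ (n = 0) := by
            simpa using eq_nil_of_mem_comps (m := n - 0) (by simpa using hbs)
          rw [if_pos rfl, if_pos rfl, if_congr hbn rfl rfl]
        · rw [if_neg (by omega), if_neg h0]
      rw [hfac]
    rw [hrhs]
    congr 1
    · congr 1
      · congr 1
        have : ((List.map (fun t => f (s + (t+1) + 1)) (List.range n)).take k)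
            = (List.range (k+1-1)).map fun t => f (s + 2 + t) := by
          rw [← List.map_take, List.take_range, min_eq_left hk']
          apply List.map_congr_left
          intro t _
          congr 1
          omega
        rw [this, pprod]
      · by_cases h0 : k = 0
        · subst h0
          rw [if_pos rfl, if_pos rfl]
          congr 2
          have : ((List.map (fun t => f (s + (t+1) + 1)) (List.range n)).isEmpty = true) ↔ n = 0 := by
            simp [List.isEmpty_iff]
          exact if_congr this rfl rfl
        · rw [if_neg h0, if_neg h0]
    · rw [← List.map_drop, range_drop, List.map_map]
      calc T X μ ν ((List.range (n-k)).map ((fun t => f (s + (t+1) + 1)) ∘ (k + ·)))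
          = T X μ ν ((List.range (n-k)).map fun t => f ((s + (k+1)) + t + 1)) := by
            congr 1
            apply List.map_congr_left
            intro t _
            simp only [Function.comp]
            congr 1
            omega
        _ = ∑ bs ∈ comps (n - k), Vlist X μ ν f bs (s + (k+1)) := T_eq_sum (n-k) (s + (k+1))
  termination_by n => n
  decreasing_by omega

section Generic
variable {ι : Type*} [DecidableEq ι]

lemma prod_map_smul (l : List ι) (s : ι → ℂ) (v : ι → B) :
    (l.map fun j => s j • v j).prod = (l.map s).prod • (l.map v).prod := by
  induction l with
  | nil => simp
  | cons a t ih => simp only [List.map_cons, List.prod_cons, ih, smul_mul_smul_comm]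

lemma central_expand : ∀ (l : List ι), l.Nodup → ∀ (u : ι → B) (m : ι → ℂ),
    (l.map fun j => u j + m j • (1 : B)).prod
      = ∑ S ∈ l.toFinset.powerset,
          (∏ j ∈ S, m j) • ((l.filter fun j => decide (j ∉ S)).map u).prod
  | [], _ => by simp
  | a :: t, hl => by
    intro u m
    have ha : a ∉ t := (List.nodup_cons.1 hl).1
    have ht : t.Nodup := (List.nodup_cons.1 hl).2
    have ih := central_expand t ht u m
    have hat : a ∉ t.toFinset := by simpa using ha
    have hdisj : Disjoint t.toFinset.powerset (t.toFinset.powerset.image (insert a)) := by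
      rw [Finset.disjoint_left]
      rintro S hS hS'
      rw [Finset.mem_image] at hS'
      obtain ⟨S', _, rfl⟩ := hS'
      exact hat (Finset.mem_powerset.1 hS (Finset.mem_insert_self a S'))
    have hinj : ∀ S ∈ t.toFinset.powerset, ∀ S' ∈ t.toFinset.powerset,
        insert a S = insert a S' → S = S' := by
      intro S hS S' hS' h
      have haS : a ∉ S := fun h' => hat (Finset.mem_powerset.1 hS h')
      have haS' : a ∉ S' := fun h' => hat (Finset.mem_powerset.1 hS' h')
      rw [← Finset.erase_insert haS, ← Finset.erase_insert haS', h]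
    rw [List.map_cons, List.prod_cons, ih, List.toFinset_cons, Finset.powerset_insert,
      Finset.sum_union hdisj, Finset.sum_image hinj]
    have h1 : ∑ S ∈ t.toFinset.powerset,
        (∏ j ∈ S, m j) • (((a :: t).filter fun j => decide (j ∉ S)).map u).prod
        = u a * ∑ S ∈ t.toFinset.powerset,
            (∏ j ∈ S, m j) • ((t.filter fun j => decide (j ∉ S)).map u).prod := by
      rw [Finset.mul_sum]
      refine Finset.sum_congr rfl fun S hS => ?_
      have haS : a ∉ S := fun h => hat (Finset.mem_powerset.1 hS h)
      rw [List.filter_cons_of_pos (by simpa using haS), List.map_cons, List.prod_cons,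
        mul_smul_comm]
    have h2 : ∑ S ∈ t.toFinset.powerset,
        (∏ j ∈ insert a S, m j) • (((a :: t).filter fun j => decide (j ∉ insert a S)).map u).prod
        = (m a • (1:B)) * ∑ S ∈ t.toFinset.powerset,
            (∏ j ∈ S, m j) • ((t.filter fun j => decide (j ∉ S)).map u).prod := by
      rw [smul_mul_assoc, one_mul, Finset.smul_sum]
      refine Finset.sum_congr rfl fun S hS => ?_
      have haS : a ∉ S := fun h => hat (Finset.mem_powerset.1 hS h)
      have hfe : List.filter (fun j => decide (j ∉ insert a S)) t
          = List.filter (fun j => decide (j ∉ S)) t := by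
        apply List.filter_congr
        intro x hx
        have hxa : x ≠ a := fun h => ha (h ▸ hx)
        simp [hxa]
      rw [Finset.prod_insert haS, List.filter_cons_of_neg (by simp), hfe, smul_smul]
    rw [h1, h2, add_mul]

end Generic

lemma Vlist_eq_prod : ∀ (bs : List ℕ) (s : ℕ),
    Vlist X μ ν f bs s =
      ((List.finRange bs.length).map fun j =>
        (-1 : ℂ) ^ (bs.get j - 1) • X (pprod f (s + (bs.take (j : ℕ)).sum) (bs.get j)) +
          (if bs.get j = 1 then
            (-(if (j : ℕ) + 1 = bs.length then μ (f (s + (bs.take (j : ℕ)).sum + 1))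
               else ν (f (s + (bs.take (j : ℕ)).sum + 1)))) • (1 : B) else 0)).prod
  | [], s => by simp [Vlist]
  | k :: bs, s => by
    rw [Vlist, Vlist_eq_prod bs (s + k)]
    rw [show List.finRange (k :: bs).length = 0 :: (List.finRange bs.length).map Fin.succ
        from List.finRange_succ (n := bs.length),
      List.map_cons, List.prod_cons, List.map_map]
    congr 1
    · -- head factor
      simp only [List.get, Fin.val_zero, List.take_zero, List.sum_nil, Nat.add_zero,
        List.length_cons, List.get_cons_zero]
      congr 1
      by_cases h1 : k = 1
      · subst h1
        simp only [eq_self_iff_true, if_true]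
        have hiff : (bs = []) ↔ ((0:ℕ) + 1 = bs.length + 1) := by
          rw [← List.length_eq_zero_iff]; omega
        exact congrArg (fun z => -z • (1:B)) (if_congr hiff rfl rfl)
      · simp only [h1, if_false]
    · -- tail
      congr 1
      refine List.map_congr_left fun j _ => ?_
      simp only [Function.comp_apply, List.get_cons_succ, Fin.val_succ, List.take_succ_cons,
        List.sum_cons, List.length_cons]
      rw [show s + k + (bs.take (j:ℕ)).sum = s + (k + (bs.take (j:ℕ)).sum) from add_assoc s k _,
        show (k :: bs).get j.succ = bs.get j from rfl]
      by_cases hone : bs.get j = 1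
      · rw [if_pos hone, if_pos hone]
        congr 2
        by_cases hc : (j:ℕ) + 1 = bs.length
        · rw [if_pos hc, if_pos (by omega : (j:ℕ) + 1 + 1 = bs.length + 1)]
        · rw [if_neg hc, if_neg (by omega : ¬((j:ℕ) + 1 + 1 = bs.length + 1))]
      · rw [if_neg hone, if_neg hone]

lemma blockProd_eq {n : ℕ} (c : Composition n) (j : Fin c.length) :
    blockProd f c j = pprod f (c.sizeUpTo j) (c.blocksFun j) := by
  obtain ⟨m, hm⟩ : ∃ m, c.blocksFun j = m + 1 :=
    ⟨c.blocksFun j - 1, by have := c.one_le_blocksFun j; omega⟩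
  rw [blockProd, hm, List.range_succ_eq_map, List.map_cons, pprod]
  simp only [hm, Nat.add_zero, Nat.add_sub_cancel, List.map_map]
  congr 1
  apply List.map_congr_left
  intro t _
  simp only [Function.comp_apply]
  congr 1
  omega

lemma sizeUpTo_last {n : ℕ} (c : Composition n) (j : Fin c.length)
    (hj : (j : ℕ) + 1 = c.length) (h1 : c.blocksFun j = 1) :
    c.sizeUpTo (j : ℕ) + 1 = n := by
  have h2 := c.sizeUpTo_length
  rw [← hj] at h2
  have h3 := c.sizeUpTo_succ j.2
  have h4 : c.blocks[(j:ℕ)] = 1 := by simpa [Composition.blocksFun] using h1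
  omega

lemma sign_prod {n : ℕ} (c : Composition n) :
    ∏ j : Fin c.length, ((-1 : ℂ)) ^ (c.blocksFun j - 1) = (-1 : ℂ) ^ (n - c.length) := by
  rw [Finset.prod_pow_eq_pow_sum]
  congr 1
  have h := c.sum_blocksFun
  have h2 : ∑ j : Fin c.length, (c.blocksFun j - 1) + ∑ _j : Fin c.length, 1
      = ∑ j : Fin c.length, c.blocksFun j := by
    rw [← Finset.sum_add_distrib]
    exact Finset.sum_congr rfl fun j _ => by have := c.one_le_blocksFun j; omega
  simp only [Finset.sum_const, Finset.card_univ, Fintype.card_fin, smul_eq_mul, mul_one] at h2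
  omega

lemma sum_comps_eq (g : List ℕ → B) (n : ℕ) :
    ∑ c : Composition n, g c.blocks = ∑ bs ∈ comps n, g bs := by
  refine Finset.sum_bij' (fun c _ => c.blocks)
    (fun bs hbs => ⟨bs, fun hi => ((mem_comps n bs).1 hbs).2 _ hi, ((mem_comps n bs).1 hbs).1⟩)
    ?_ ?_ ?_ ?_ ?_
  · intro c _
    exact (mem_comps n c.blocks).2 ⟨c.blocks_sum, fun b hb => c.blocks_pos hb⟩
  · intro bs hbs
    exact Finset.mem_univ _
  · intro c _
    rfl
  · intro bs hbs
    rfl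
  · intro c _
    rfl

lemma inner_eq {n : ℕ} (c : Composition n) :
    (∑ S ∈ (Finset.univ.filter fun j : Fin c.length => c.blocksFun j = 1).powerset,
      ((-1 : ℂ) ^ (n - c.length + S.card)
        * (∏ j ∈ S.filter fun j : Fin c.length => (j : ℕ) + 1 ≠ c.length, ν (blockProd f c j))
        * (if ∃ j ∈ S, (j : ℕ) + 1 = c.length then μ (f n) else 1)) •
      (((List.finRange c.length).filter fun j => decide (j ∉ S)).map
        fun j => X (blockProd f c j)).prod)
    = Vlist X μ ν f c.blocks 0 := by
  classical
  set m : Fin c.length → ℂ := fun j => if c.blocksFun j = 1 then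
      -(if (j:ℕ) + 1 = c.length then μ (f n) else ν (blockProd f c j)) else 0 with hm
  set u : Fin c.length → B := fun j => ((-1 : ℂ)) ^ (c.blocksFun j - 1) • X (blockProd f c j)
    with hu
  -- Step 1: Vlist as a product
  have hV : Vlist X μ ν f c.blocks 0
      = ((List.finRange c.length).map fun j => u j + m j • (1:B)).prod := by
    rw [Vlist_eq_prod]
    congr 1
    apply List.map_congr_left
    intro j _
    have hbg : c.blocks.get j = c.blocksFun j := rfl
    have hsz : (c.blocks.take (j:ℕ)).sum = c.sizeUpTo (j:ℕ) := rfl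
    have hbp : pprod f (0 + (c.blocks.take (j:ℕ)).sum) (c.blocksFun j) = blockProd f c j := by
      rw [hsz, Nat.zero_add]
      exact (blockProd_eq f c j).symm
    rw [hbg, hbp, hu, hm]
    beta_reduce
    congr 1
    by_cases h1 : c.blocksFun j = 1
    · rw [if_pos h1, if_pos h1]
      congr 2
      by_cases hl : (j:ℕ) + 1 = c.length
      · have hl' : (j:ℕ) + 1 = c.blocks.length := hl
        rw [if_pos hl, if_pos hl']
        have h2 : c.sizeUpTo (j:ℕ) + 1 = n := sizeUpTo_last c j hl h1
        rw [hsz, Nat.zero_add, h2]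
      · have hl' : ¬((j:ℕ) + 1 = c.blocks.length) := hl
        rw [if_neg hl, if_neg hl']
        rw [hsz, Nat.zero_add]
        have hb : blockProd f c j = f (c.sizeUpTo (j:ℕ) + 1) := by
          rw [blockProd_eq, h1, pprod]
          simp
        rw [hb]
    · rw [if_neg h1, if_neg h1, zero_smul]
  -- Step 2: central expansion
  rw [hV, central_expand (List.finRange c.length) (List.nodup_finRange c.length) u m]
  rw [List.toFinset_finRange]
  -- Step 3: restrict the sum
  rw [← Finset.sum_subset
    (Finset.powerset_mono.2 (Finset.filter_subset (fun j : Fin c.length => c.blocksFun j = 1)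
      Finset.univ))
    (fun S _ hS => by
      obtain ⟨j, hjS, hj⟩ : ∃ j ∈ S, ¬ c.blocksFun j = 1 := by
        by_contra h
        push_neg at h
        exact hS (Finset.mem_powerset.2 fun x hx =>
          Finset.mem_filter.2 ⟨Finset.mem_univ x, h x hx⟩)
      rw [Finset.prod_eq_zero hjS (by rw [hm]; exact if_neg hj), zero_smul])]
  -- Step 4: termwise equality
  refine Finset.sum_congr rfl fun S hS => ?_
  have hSsing : ∀ j ∈ S, c.blocksFun j = 1 := fun j hj =>
    (Finset.mem_filter.1 (Finset.mem_powerset.1 hS hj)).2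
  -- RHS product via prod_map_smul
  have hmap : (((List.finRange c.length).filter fun j => decide (j ∉ S)).map u).prod
      = (-1 : ℂ) ^ (n - c.length) •
        ((((List.finRange c.length).filter fun j => decide (j ∉ S)).map
          fun j => X (blockProd f c j)).prod) := by
    rw [hu]
    rw [prod_map_smul (((List.finRange c.length).filter fun j => decide (j ∉ S)))
      (fun j => ((-1:ℂ)) ^ (c.blocksFun j - 1)) (fun j => X (blockProd f c j))]
    congr 1
    -- sign product over the filtered list equals (-1)^(n-k)
    have hnd : ((List.finRange c.length).filter fun j => decide (j ∉ S)).Nodup :=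
      (List.nodup_finRange c.length).filter _
    rw [← List.prod_toFinset _ hnd]
    have htf : ((List.finRange c.length).filter fun j => decide (j ∉ S)).toFinset
        = Finset.univ.filter (fun j => j ∉ S) := by
      ext j
      simp [List.mem_filter]
    rw [htf]
    rw [← sign_prod c]
    apply Finset.prod_subset (Finset.filter_subset _ _)
    intro j _ hj
    have hjS : j ∈ S := by
      by_contra h
      exact hj (Finset.mem_filter.2 ⟨Finset.mem_univ j, h⟩)
    rw [hSsing j hjS]
    simp
  rw [hmap, smul_smul]
  congr 1
  -- scalar identity
  have hprodm : ∏ j ∈ S, m j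
      = (-1 : ℂ) ^ S.card *
        ((∏ j ∈ S.filter fun j : Fin c.length => (j : ℕ) + 1 ≠ c.length, ν (blockProd f c j))
          * (if ∃ j ∈ S, (j : ℕ) + 1 = c.length then μ (f n) else 1)) := by
    have : ∀ j ∈ S, m j = (-1 : ℂ) *
        (if (j:ℕ) + 1 = c.length then μ (f n) else ν (blockProd f c j)) := by
      intro j hj
      rw [hm]
      simp only [if_pos (hSsing j hj)]
      ring
    rw [Finset.prod_congr rfl this, Finset.prod_mul_distrib, Finset.prod_const]
    have hν : (∏ j ∈ S.filter (fun j : Fin c.length => ¬((j:ℕ) + 1 = c.length)),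
          (if (j:ℕ) + 1 = c.length then μ (f n) else ν (blockProd f c j)))
        = ∏ j ∈ S.filter (fun j : Fin c.length => (j:ℕ) + 1 ≠ c.length),
            ν (blockProd f c j) := by
      apply Finset.prod_congr
      · apply Finset.filter_congr
        intro x _
        tauto
      · intro j hj
        exact if_neg (by simpa using (Finset.mem_filter.1 hj).2)
    have hμ : (∏ j ∈ S.filter (fun j : Fin c.length => ((j:ℕ) + 1 = c.length)),
          (if (j:ℕ) + 1 = c.length then μ (f n) else ν (blockProd f c j)))
        = (if ∃ j ∈ S, (j : ℕ) + 1 = c.length then μ (f n) else 1) := by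
      by_cases hex : ∃ j ∈ S, (j : ℕ) + 1 = c.length
      · rw [if_pos hex]
        obtain ⟨j₀, hj₀S, hj₀⟩ := hex
        have hfilt : S.filter (fun j : Fin c.length => ((j:ℕ) + 1 = c.length))
            = ({j₀} : Finset (Fin c.length)) := by
          ext j
          simp only [Finset.mem_filter, Finset.mem_singleton]
          constructor
          · rintro ⟨hjS, hj⟩
            exact Fin.ext (by omega)
          · rintro rfl
            exact ⟨hj₀S, hj₀⟩
        rw [hfilt, Finset.prod_singleton, if_pos hj₀]
      · rw [if_neg hex]
        have hfe : S.filter (fun j : Fin c.length => ((j:ℕ) + 1 = c.length)) = ∅ := by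
          apply Finset.filter_eq_empty_iff.2
          push_neg at hex
          exact fun j hj => hex j hj
        rw [hfe, Finset.prod_empty]
    rw [← Finset.prod_filter_mul_prod_filter_not S (fun j : Fin c.length => (j:ℕ) + 1 = c.length),
      hν, hμ]
    ring
  rw [hprodm]
  rw [pow_add]
  ring


end Aux

/-- the closed formula for the c-free Kailath–Segall element
`W(f₁, …, fₙ)` as a sum over compositions `c` of `n` (with blocks `B₁, …, B_k`) and
subsets `S` of the set of singleton blocks of `c`. -/
theorem kailath_segall_closed_formula (X : A₀ →ₗ[ℂ] B) (μ ν : A₀ →ₗ[ℂ] ℂ)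
    (n : ℕ) (hn : 1 ≤ n) (f : ℕ → A₀) :
    KS X μ ν ((List.range n).map fun t => f (t + 1)) =
      ∑ c : Composition n,
        ∑ S ∈ (Finset.univ.filter fun j : Fin c.length => c.blocksFun j = 1).powerset,
          ((-1 : ℂ) ^ (n - c.length + S.card)
              * (∏ j ∈ S.filter fun j : Fin c.length => (j : ℕ) + 1 ≠ c.length, ν (blockProd f c j))
              * (if ∃ j ∈ S, (j : ℕ) + 1 = c.length then μ (f n) else 1)) •
            (((List.finRange c.length).filter fun j => decide (j ∉ S)).map
              fun j => X (blockProd f c j)).prod := by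
  have hl : (List.range n).map (fun t => f (t + 1))
      = (List.range n).map (fun t => f (0 + t + 1)) := by simp
  rw [KS_eq_T, hl, T_eq_sum X μ ν f n 0,
    ← sum_comps_eq (fun bs => Vlist X μ ν f bs 0) n]
  exact Finset.sum_congr rfl fun c _ => (inner_eq X μ ν f c).symm
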